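/- The function θ ↦ φ(θ) − (log 2 / 2)·cot(θ/2) is convex on the interval (0,π). (Equivalently, its derivative φ' − (log 2 / 2)·ψ', where ψ(θ) = cot(θ/2), is increasing on (0,π).) -/

import Mathlib

open Real Set

open MeasureTheory Filter Topology

/-- `φ(θ) = ∫₀^∞ sinh((π−θ)ξ) / (sinh(πξ)·cosh(θξ)) dξ`. -/
noncomputable def phi (θ : ℝ) : ℝ :=
  ∫ ξ in Ioi (0:ℝ), Real.sinh ((π - θ) * ξ) / (Real.sinh (π * ξ) * Real.cosh (θ * ξ))

noncomputable def f0 (θ x : ℝ) : ℝ :=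
  Real.sinh ((π - θ) * x) / (Real.sinh (π * x) * Real.cosh (θ * x))
noncomputable def f1 (θ x : ℝ) : ℝ :=
  -(x * Real.cosh (π * x) / (Real.sinh (π * x) * Real.cosh (θ * x) ^ 2))
noncomputable def f2 (θ x : ℝ) : ℝ :=
  2 * x ^ 2 * Real.cosh (π * x) * Real.sinh (θ * x) /
    (Real.sinh (π * x) * Real.cosh (θ * x) ^ 3)

lemma sinh_pi_x_pos {x : ℝ} (hx : 0 < x) : 0 < Real.sinh (π * x) :=
  Real.sinh_pos_iff.2 (by positivity)

lemma hasDerivAt_f0 {x : ℝ} (hx : 0 < x) (θ : ℝ) :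
    HasDerivAt (fun θ => f0 θ x) (f1 θ x) θ := by
  have hs := (sinh_pi_x_pos hx).ne'
  have hc := (Real.cosh_pos (θ * x)).ne'
  have hu : HasDerivAt (fun θ : ℝ => Real.sinh ((π - θ) * x))
      (Real.cosh ((π - θ) * x) * (-x)) θ := by
    have := (((hasDerivAt_id θ).const_sub π).mul_const x).sinh
    simpa using this
  have hv : HasDerivAt (fun θ : ℝ => Real.sinh (π * x) * Real.cosh (θ * x))
      (Real.sinh (π * x) * (Real.sinh (θ * x) * x)) θ := by
    have := (((hasDerivAt_id θ).mul_const x).cosh).const_mul (Real.sinh (π * x))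
    simpa using this
  have h := hu.div hv (by positivity)
  refine h.congr_deriv (Eq.symm ?_)
  have key : Real.cosh (π * x)
      = Real.cosh ((π - θ) * x) * Real.cosh (θ * x)
        + Real.sinh ((π - θ) * x) * Real.sinh (θ * x) := by
    rw [show π * x = (π - θ) * x + θ * x by ring, Real.cosh_add]
  rw [f1]
  field_simp
  linear_combination (norm := ring_nf) (-1:ℝ) * key

lemma hasDerivAt_f1 {x : ℝ} (hx : 0 < x) (θ : ℝ) :
    HasDerivAt (fun θ => f1 θ x) (f2 θ x) θ := by
  have hs := (sinh_pi_x_pos hx).ne'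
  have hc := (Real.cosh_pos (θ * x)).ne'
  have hv : HasDerivAt (fun θ : ℝ => Real.sinh (π * x) * Real.cosh (θ * x) ^ 2)
      (Real.sinh (π * x) * (2 * Real.cosh (θ * x) * (Real.sinh (θ * x) * x))) θ := by
    have := ((((hasDerivAt_id θ).mul_const x).cosh).pow 2).const_mul (Real.sinh (π * x))
    simpa using this
    
  have h := ((hasDerivAt_const θ (x * Real.cosh (π * x))).div hv (by positivity)).neg
  refine h.congr_deriv (Eq.symm ?_)
  rw [f2]
  field_simp
  ring

lemma cosh_ge_half_exp (t : ℝ) : Real.exp t / 2 ≤ Real.cosh t := by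
  rw [Real.cosh_eq]
  have := (Real.exp_pos (-t)).le
  linarith

lemma sinh_le_cosh' (t : ℝ) : Real.sinh t ≤ Real.cosh t := by
  rw [Real.cosh_eq, Real.sinh_eq]
  have := (Real.exp_pos (-t)).le
  linarith

lemma sech_le {t : ℝ} (ht : 0 ≤ t) : 1 / Real.cosh t ≤ 2 * Real.exp (-t) := by
  rw [div_le_iff₀ (Real.cosh_pos t)]
  have h2 : Real.exp (-t) * Real.exp t = 1 := by
    rw [← Real.exp_add]; simp
  rw [Real.cosh_eq]
  nlinarith [sq_nonneg (Real.exp (-t)), Real.exp_pos (-t), Real.exp_pos t]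

lemma two_exp_sq (t : ℝ) : (2 * Real.exp t) ^ 2 = 4 * Real.exp (2 * t) := by
  calc (2 * Real.exp t) ^ 2 = 4 * (Real.exp t * Real.exp t) := by ring
  _ = 4 * Real.exp (t + t) := by rw [← Real.exp_add]
  _ = 4 * Real.exp (2 * t) := by rw [show t + t = 2 * t by ring]

lemma sech_sq_le {δ θ x : ℝ} (hδ : 0 < δ) (hθ : δ ≤ θ) (hx : 0 ≤ x) :
    1 / Real.cosh (θ * x) ^ 2 ≤ 4 * Real.exp (-(2 * δ) * x) := by
  have hθx : 0 ≤ θ * x := mul_nonneg (by linarith) hx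
  have s2 := sech_le hθx
  have s5 : Real.exp (2 * -(θ * x)) ≤ Real.exp (-(2 * δ) * x) := by
    apply Real.exp_le_exp.2; nlinarith
  calc 1 / Real.cosh (θ * x) ^ 2 = (1 / Real.cosh (θ * x)) ^ 2 := by ring
  _ ≤ (2 * Real.exp (-(θ * x))) ^ 2 := pow_le_pow_left₀ (by positivity) s2 2
  _ = 4 * Real.exp (2 * -(θ * x)) := two_exp_sq _
  _ ≤ 4 * Real.exp (-(2 * δ) * x) := by linarith

lemma coth_le {t : ℝ} (ht : 0 < t) : Real.cosh t ≤ Real.sinh t * (1 + 1 / t) := by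
  have hs := Real.self_lt_sinh_iff.2 ht
  have h1 : Real.cosh t = Real.sinh t + Real.exp (-t) := by
    rw [Real.cosh_eq, Real.sinh_eq]; ring
  have h2 : Real.exp (-t) ≤ 1 := by rw [Real.exp_le_one_iff]; linarith
  have h3 : 1 ≤ Real.sinh t / t := (one_le_div ht).2 hs.le
  have h4 : Real.exp (-t) ≤ Real.sinh t / t := le_trans h2 h3
  rw [h1, mul_add, mul_one, mul_one_div]
  linarith

lemma self_le_exp {c x : ℝ} (hc : 0 < c) (hx : 0 ≤ x) : x ≤ Real.exp (c * x) / c := by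
  rw [le_div_iff₀ hc]
  have h := Real.add_one_le_exp (c * x)
  nlinarith

lemma sq_le_exp {c x : ℝ} (hc : 0 < c) (hx : 0 ≤ x) : x ^ 2 ≤ 4 * Real.exp (c * x) / c ^ 2 := by
  have h := self_le_exp (c := c / 2) (x := x) (by linarith) hx
  have h2 : x ^ 2 ≤ (Real.exp (c / 2 * x) / (c / 2)) ^ 2 := pow_le_pow_left₀ hx h 2
  have h3 : Real.exp (c / 2 * x) * Real.exp (c / 2 * x) = Real.exp (c * x) := by
    rw [← Real.exp_add]; ring_nf
  calc x ^ 2 ≤ (Real.exp (c / 2 * x) / (c / 2)) ^ 2 := h2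
  _ = 4 * (Real.exp (c / 2 * x) * Real.exp (c / 2 * x)) / c ^ 2 := by
      rw [div_pow]; ring
  _ = 4 * Real.exp (c * x) / c ^ 2 := by rw [h3]

lemma f0_nonneg {θ x : ℝ} (hθπ : θ ≤ π) (hx : 0 < x) : 0 ≤ f0 θ x := by
  have h1 : 0 ≤ Real.sinh ((π - θ) * x) := Real.sinh_nonneg_iff.2 (by nlinarith)
  have h2 : 0 < Real.sinh (π * x) := sinh_pi_x_pos hx
  have h3 := Real.cosh_pos (θ * x)
  rw [f0]
  positivity

lemma f0_le {θ x : ℝ} (hθ : 0 < θ) (hθπ : θ ≤ π) (hx : 0 < x) :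
    f0 θ x ≤ 4 * Real.exp (-(2 * θ) * x) := by
  have hsN : 0 ≤ Real.sinh ((π - θ) * x) := Real.sinh_nonneg_iff.2 (by nlinarith)
  have hsθ : 0 < Real.sinh (θ * x) := Real.sinh_pos_iff.2 (by positivity)
  have hcθ : 0 < Real.cosh (θ * x) := Real.cosh_pos _
  have hcN : 0 < Real.cosh ((π - θ) * x) := Real.cosh_pos _
  have hsπ : 0 < Real.sinh (π * x) := sinh_pi_x_pos hx
  have key : Real.sinh ((π - θ) * x) * Real.cosh (θ * x) ≤ Real.sinh (π * x) := by
    have : Real.sinh (π * x) = Real.sinh ((π - θ) * x) * Real.cosh (θ * x)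
        + Real.cosh ((π - θ) * x) * Real.sinh (θ * x) := by
      rw [show π * x = (π - θ) * x + θ * x by ring, Real.sinh_add]
    nlinarith
  have step1 : f0 θ x ≤ 1 / Real.cosh (θ * x) ^ 2 := by
    rw [f0, div_le_div_iff₀ (by positivity) (by positivity)]
    nlinarith
  have step3 := sech_sq_le hθ le_rfl hx.le
  linarith

lemma f1_bound {δ θ x : ℝ} (hδ : 0 < δ) (hθ : δ ≤ θ) (hx : 0 < x) :
    |f1 θ x| ≤ 4 * (1 / δ + 1 / π) * Real.exp (-δ * x) := by
  have hsπ : 0 < Real.sinh (π * x) := sinh_pi_x_pos hx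
  have hcθ : 0 < Real.cosh (θ * x) := Real.cosh_pos _
  have hθ0 : 0 < θ := lt_of_lt_of_le hδ hθ
  have habs : |f1 θ x| = x * Real.cosh (π * x) / (Real.sinh (π * x) * Real.cosh (θ * x) ^ 2) := by
    rw [f1, abs_neg, abs_of_nonneg (by positivity)]
  rw [habs]
  have hπx : 0 < π * x := by positivity
  have h1 : x * Real.cosh (π * x) ≤ Real.sinh (π * x) * (x + 1 / π) := by
    have := coth_le hπx
    have hx' : x * (Real.sinh (π * x) * (1 + 1 / (π * x)))
        = Real.sinh (π * x) * (x + 1 / π) := by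
      field_simp
    nlinarith
  have h2 := sech_sq_le hδ hθ hx.le
  have h3 : x + 1 / π ≤ (1 / δ + 1 / π) * Real.exp (δ * x) := by
    have e1 : x ≤ Real.exp (δ * x) / δ := self_le_exp hδ hx.le
    have e2 : (1 : ℝ) ≤ Real.exp (δ * x) := by
      rw [← Real.exp_zero]; exact Real.exp_le_exp.2 (by positivity)
    have e3 : 1 / π ≤ 1 / π * Real.exp (δ * x) :=
      le_mul_of_one_le_right (by positivity) e2
    have e4 : 1 / δ * Real.exp (δ * x) = Real.exp (δ * x) / δ := by ring
    rw [add_mul, e4]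
    linarith
  have key : x * Real.cosh (π * x) / (Real.sinh (π * x) * Real.cosh (θ * x) ^ 2)
      ≤ (x + 1 / π) * (1 / Real.cosh (θ * x) ^ 2) := by
    rw [div_le_iff₀ (by positivity)]
    have hexp : (x + 1 / π) * (1 / Real.cosh (θ * x) ^ 2) *
        (Real.sinh (π * x) * Real.cosh (θ * x) ^ 2)
        = Real.sinh (π * x) * (x + 1 / π) := by
      field_simp
    rw [hexp]
    exact h1
  have h4 : (x + 1 / π) * (1 / Real.cosh (θ * x) ^ 2)
      ≤ ((1 / δ + 1 / π) * Real.exp (δ * x)) * (4 * Real.exp (-(2 * δ) * x)) :=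
    mul_le_mul h3 h2 (by positivity) (by positivity)
  have hee : Real.exp (δ * x) * Real.exp (-(2 * δ) * x) = Real.exp (-δ * x) := by
    rw [← Real.exp_add]; ring_nf
  have h5 : ((1 / δ + 1 / π) * Real.exp (δ * x)) * (4 * Real.exp (-(2 * δ) * x))
      = 4 * (1 / δ + 1 / π) * Real.exp (-δ * x) := by
    linear_combination (4 * (1 / δ + 1 / π)) * hee
  linarith

lemma f2_bound {δ θ x : ℝ} (hδ : 0 < δ) (hθ : δ ≤ θ) (hx : 0 < x) :
    |f2 θ x| ≤ 8 * (4 / δ ^ 2 + 1 / (δ * π)) * Real.exp (-δ * x) := by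
  have hsπ : 0 < Real.sinh (π * x) := sinh_pi_x_pos hx
  have hcθ : 0 < Real.cosh (θ * x) := Real.cosh_pos _
  have hθ0 : 0 < θ := lt_of_lt_of_le hδ hθ
  have hsθ : 0 < Real.sinh (θ * x) := Real.sinh_pos_iff.2 (by positivity)
  have habs : |f2 θ x| = 2 * x ^ 2 * Real.cosh (π * x) * Real.sinh (θ * x) /
      (Real.sinh (π * x) * Real.cosh (θ * x) ^ 3) := by
    rw [f2, abs_of_nonneg (by positivity)]
  rw [habs]
  have hπx : 0 < π * x := by positivity
  have htanh : Real.sinh (θ * x) ≤ Real.cosh (θ * x) := sinh_le_cosh' _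
  have h1 : x ^ 2 * Real.cosh (π * x) ≤ Real.sinh (π * x) * (x ^ 2 + x / π) := by
    have := coth_le hπx
    have hx' : x ^ 2 * (Real.sinh (π * x) * (1 + 1 / (π * x)))
        = Real.sinh (π * x) * (x ^ 2 + x / π) := by
      field_simp
    nlinarith
  have h2 := sech_sq_le hδ hθ hx.le
  have h3 : x ^ 2 + x / π ≤ (4 / δ ^ 2 + 1 / (δ * π)) * Real.exp (δ * x) := by
    have e1 : x ^ 2 ≤ 4 * Real.exp (δ * x) / δ ^ 2 := sq_le_exp hδ hx.le
    have e2 : x * δ ≤ Real.exp (δ * x) := by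
      have := self_le_exp hδ hx.le
      rw [le_div_iff₀ hδ] at this
      linarith
    have e3 : x / π ≤ Real.exp (δ * x) / (δ * π) := by
      rw [div_le_div_iff₀ Real.pi_pos (by positivity)]
      nlinarith [Real.pi_pos]
    have e4 : (4 / δ ^ 2 + 1 / (δ * π)) * Real.exp (δ * x)
        = 4 * Real.exp (δ * x) / δ ^ 2 + Real.exp (δ * x) / (δ * π) := by
      field_simp
    rw [e4]
    linarith
  have key : 2 * x ^ 2 * Real.cosh (π * x) * Real.sinh (θ * x) /
      (Real.sinh (π * x) * Real.cosh (θ * x) ^ 3)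
      ≤ 2 * ((x ^ 2 + x / π) * (1 / Real.cosh (θ * x) ^ 2)) := by
    rw [div_le_iff₀ (by positivity)]
    have expand : 2 * ((x ^ 2 + x / π) * (1 / Real.cosh (θ * x) ^ 2)) *
        (Real.sinh (π * x) * Real.cosh (θ * x) ^ 3)
        = 2 * (Real.sinh (π * x) * (x ^ 2 + x / π)) * Real.cosh (θ * x) := by
      field_simp
    rw [expand]
    nlinarith [mul_le_mul h1 htanh hsθ.le
      (le_trans (by positivity) h1)]
  have h4 : (x ^ 2 + x / π) * (1 / Real.cosh (θ * x) ^ 2)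
      ≤ ((4 / δ ^ 2 + 1 / (δ * π)) * Real.exp (δ * x)) * (4 * Real.exp (-(2 * δ) * x)) :=
    mul_le_mul h3 h2 (by positivity) (by positivity)
  have hee : Real.exp (δ * x) * Real.exp (-(2 * δ) * x) = Real.exp (-δ * x) := by
    rw [← Real.exp_add]; ring_nf
  have h5 : ((4 / δ ^ 2 + 1 / (δ * π)) * Real.exp (δ * x)) * (4 * Real.exp (-(2 * δ) * x))
      = 4 * (4 / δ ^ 2 + 1 / (δ * π)) * Real.exp (-δ * x) := by
    linear_combination (4 * (4 / δ ^ 2 + 1 / (δ * π))) * hee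
  nlinarith [Real.exp_pos (-δ * x)]

noncomputable def phi1 (θ : ℝ) : ℝ := ∫ x in Ioi (0:ℝ), f1 θ x
noncomputable def phi2 (θ : ℝ) : ℝ := ∫ x in Ioi (0:ℝ), f2 θ x

lemma contOn_f0 (θ : ℝ) : ContinuousOn (fun x => f0 θ x) (Ioi (0:ℝ)) := by
  apply ContinuousOn.div
  · exact (Continuous.continuousOn (by fun_prop))
  · exact (Continuous.continuousOn (by fun_prop))
  · intro x hx
    exact ne_of_gt (mul_pos (sinh_pi_x_pos hx) (Real.cosh_pos _))

lemma contOn_f1 (θ : ℝ) : ContinuousOn (fun x => f1 θ x) (Ioi (0:ℝ)) := by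
  apply ContinuousOn.neg
  apply ContinuousOn.div
  · exact (Continuous.continuousOn (by fun_prop))
  · exact (Continuous.continuousOn (by fun_prop))
  · intro x hx
    exact ne_of_gt (mul_pos (sinh_pi_x_pos hx) (pow_pos (Real.cosh_pos _) 2))

lemma contOn_f2 (θ : ℝ) : ContinuousOn (fun x => f2 θ x) (Ioi (0:ℝ)) := by
  apply ContinuousOn.div
  · exact (Continuous.continuousOn (by fun_prop))
  · exact (Continuous.continuousOn (by fun_prop))
  · intro x hx
    exact ne_of_gt (mul_pos (sinh_pi_x_pos hx) (pow_pos (Real.cosh_pos _) 3))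

lemma integrable_exp_bound (C : ℝ) {c : ℝ} (hc : 0 < c) :
    IntegrableOn (fun x => C * Real.exp (-c * x)) (Ioi (0:ℝ)) :=
  (exp_neg_integrableOn_Ioi 0 hc).const_mul C

lemma integrable_f0 {θ : ℝ} (h0 : 0 < θ) (hπ : θ ≤ π) : IntegrableOn (fun x => f0 θ x) (Ioi (0:ℝ)) := by
  apply Integrable.mono (integrable_exp_bound 4 (by positivity : (0:ℝ) < 2 * θ))
    ((contOn_f0 θ).aestronglyMeasurable measurableSet_Ioi)
  rw [ae_restrict_iff' measurableSet_Ioi]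
  refine ae_of_all _ (fun x hx => ?_)
  have hx' : (0:ℝ) < x := hx
  rw [Real.norm_eq_abs, Real.norm_eq_abs, abs_of_nonneg (f0_nonneg hπ hx'),
    abs_of_nonneg (by positivity)]
  exact f0_le h0 hπ hx'

lemma integrable_f1 {θ : ℝ} (h0 : 0 < θ) : IntegrableOn (fun x => f1 θ x) (Ioi (0:ℝ)) := by
  apply Integrable.mono (integrable_exp_bound (4 * (1 / θ + 1 / π)) h0)
    ((contOn_f1 θ).aestronglyMeasurable measurableSet_Ioi)
  rw [ae_restrict_iff' measurableSet_Ioi]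
  refine ae_of_all _ (fun x hx => ?_)
  have hx' : (0:ℝ) < x := hx
  have h1 : (0:ℝ) < 1 / θ := one_div_pos.mpr h0
  have h2 : (0:ℝ) < 1 / π := one_div_pos.mpr Real.pi_pos
  have hb : (0:ℝ) ≤ 4 * (1 / θ + 1 / π) * Real.exp (-θ * x) :=
    (mul_pos (by nlinarith) (Real.exp_pos _)).le
  rw [Real.norm_eq_abs, Real.norm_eq_abs, abs_of_nonneg hb]
  exact f1_bound h0 le_rfl hx'

lemma integrable_f2 {θ : ℝ} (h0 : 0 < θ) : IntegrableOn (fun x => f2 θ x) (Ioi (0:ℝ)) := by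
  apply Integrable.mono (integrable_exp_bound (8 * (4 / θ ^ 2 + 1 / (θ * π))) h0)
    ((contOn_f2 θ).aestronglyMeasurable measurableSet_Ioi)
  rw [ae_restrict_iff' measurableSet_Ioi]
  refine ae_of_all _ (fun x hx => ?_)
  have hx' : (0:ℝ) < x := hx
  have h1 : (0:ℝ) < 4 / θ ^ 2 := by
    apply div_pos (by norm_num) (by positivity)
  have h2 : (0:ℝ) < 1 / (θ * π) := one_div_pos.mpr (mul_pos h0 Real.pi_pos)
  have hb : (0:ℝ) ≤ 8 * (4 / θ ^ 2 + 1 / (θ * π)) * Real.exp (-θ * x) :=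
    (mul_pos (by nlinarith) (Real.exp_pos _)).le
  rw [Real.norm_eq_abs, Real.norm_eq_abs, abs_of_nonneg hb]
  exact f2_bound h0 le_rfl hx'

lemma ball_lower {θ₀ θ : ℝ} (h0 : 0 < θ₀) (hθ : θ ∈ Metric.ball θ₀ (θ₀ / 2)) :
    θ₀ / 2 ≤ θ := by
  have := Metric.mem_ball.1 hθ
  rw [Real.dist_eq, abs_sub_lt_iff] at this
  linarith [this.2]

lemma hasDerivAt_phi {θ₀ : ℝ} (h0 : 0 < θ₀) (hπ : θ₀ < π) :
    HasDerivAt phi (phi1 θ₀) θ₀ := by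
  have hε : 0 < θ₀ / 2 := by positivity
  have key := hasDerivAt_integral_of_dominated_loc_of_deriv_le
    (μ := volume.restrict (Ioi (0:ℝ))) (F := fun θ x => f0 θ x) (F' := fun θ x => f1 θ x)
    (x₀ := θ₀) (bound := fun x => 4 * (1 / (θ₀ / 2) + 1 / π) * Real.exp (-(θ₀ / 2) * x))
    (s := Metric.ball θ₀ (θ₀ / 2)) (Metric.ball_mem_nhds θ₀ hε)
    (Eventually.of_forall fun θ => (contOn_f0 θ).aestronglyMeasurable measurableSet_Ioi)
    (integrable_f0 h0 hπ.le)
    ((contOn_f1 θ₀).aestronglyMeasurable measurableSet_Ioi)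
    ?_ (integrable_exp_bound _ hε) ?_
  · exact key.2
  · rw [ae_restrict_iff' measurableSet_Ioi]
    refine ae_of_all _ (fun x hx θ hθ => ?_)
    have hx' : (0:ℝ) < x := hx
    rw [Real.norm_eq_abs]
    exact f1_bound hε (ball_lower h0 hθ) hx'
  · rw [ae_restrict_iff' measurableSet_Ioi]
    refine ae_of_all _ (fun x hx θ _ => hasDerivAt_f0 hx θ)

lemma hasDerivAt_phi1 {θ₀ : ℝ} (h0 : 0 < θ₀) (hπ : θ₀ < π) :
    HasDerivAt phi1 (phi2 θ₀) θ₀ := by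
  have hε : 0 < θ₀ / 2 := by positivity
  have key := hasDerivAt_integral_of_dominated_loc_of_deriv_le
    (μ := volume.restrict (Ioi (0:ℝ))) (F := fun θ x => f1 θ x) (F' := fun θ x => f2 θ x)
    (x₀ := θ₀) (bound := fun x => 8 * (4 / (θ₀ / 2) ^ 2 + 1 / ((θ₀ / 2) * π)) *
      Real.exp (-(θ₀ / 2) * x))
    (s := Metric.ball θ₀ (θ₀ / 2)) (Metric.ball_mem_nhds θ₀ hε)
    (Eventually.of_forall fun θ => (contOn_f1 θ).aestronglyMeasurable measurableSet_Ioi)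
    (integrable_f1 h0)
    ((contOn_f2 θ₀).aestronglyMeasurable measurableSet_Ioi)
    ?_ (integrable_exp_bound _ hε) ?_
  · exact key.2
  · rw [ae_restrict_iff' measurableSet_Ioi]
    refine ae_of_all _ (fun x hx θ hθ => ?_)
    have hx' : (0:ℝ) < x := hx
    rw [Real.norm_eq_abs]
    exact f2_bound hε (ball_lower h0 hθ) hx'
  · rw [ae_restrict_iff' measurableSet_Ioi]
    refine ae_of_all _ (fun x hx θ _ => hasDerivAt_f1 hx θ)

noncomputable def G (u : ℝ) : ℝ :=
  u * Real.sinh u / Real.cosh u - u ^ 2 / (2 * Real.cosh u ^ 2) - Real.log (Real.cosh u)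

lemma hasDerivAt_G (u : ℝ) :
    HasDerivAt G (u ^ 2 * Real.sinh u / Real.cosh u ^ 3) u := by
  have hc := (Real.cosh_pos u).ne'
  have hA : HasDerivAt (fun u : ℝ => u * Real.sinh u / Real.cosh u)
      (((1 * Real.sinh u + u * Real.cosh u) * Real.cosh u
        - u * Real.sinh u * Real.sinh u) / Real.cosh u ^ 2) u :=
    ((hasDerivAt_id u).mul (Real.hasDerivAt_sinh u)).div (Real.hasDerivAt_cosh u) hc
  have hden : HasDerivAt (fun u : ℝ => 2 * Real.cosh u ^ 2)
      (2 * (2 * Real.cosh u * Real.sinh u)) u := by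
    have := ((Real.hasDerivAt_cosh u).pow 2).const_mul (2:ℝ)
    simpa [mul_comm] using this
  have hB : HasDerivAt (fun u : ℝ => u ^ 2 / (2 * Real.cosh u ^ 2))
      ((2 * u ^ 1 * (2 * Real.cosh u ^ 2) - u ^ 2 * (2 * (2 * Real.cosh u * Real.sinh u)))
        / (2 * Real.cosh u ^ 2) ^ 2) u :=
    (hasDerivAt_pow 2 u).div hden (by positivity)
  have hC : HasDerivAt (fun u : ℝ => Real.log (Real.cosh u))
      (Real.sinh u / Real.cosh u) u := by
    simpa using (Real.hasDerivAt_cosh u).log hc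
  have h := (hA.sub hB).sub hC
  refine h.congr_deriv (Eq.symm ?_)
  have hsq : Real.sinh u ^ 2 = Real.cosh u ^ 2 - 1 := by
    have := Real.cosh_sq_sub_sinh_sq u; linarith
  field_simp
  linear_combination (u * Real.cosh u) * hsq

lemma tendsto_two_mul_exp_neg_two_mul :
    Tendsto (fun u : ℝ => 2 * u * Real.exp (-(2 * u))) atTop (𝓝 0) := by
  have base := Real.tendsto_pow_mul_exp_neg_atTop_nhds_zero 1
  have hcomp := base.comp (Filter.Tendsto.const_mul_atTop two_pos tendsto_id)
  refine hcomp.congr (fun u => ?_)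
  simp [Function.comp]

lemma tendsto_sq_exp_neg_two_mul :
    Tendsto (fun u : ℝ => 2 * u ^ 2 * Real.exp (-(2 * u))) atTop (𝓝 0) := by
  have base := Real.tendsto_pow_mul_exp_neg_atTop_nhds_zero 2
  have hcomp := (base.comp (Filter.Tendsto.const_mul_atTop two_pos tendsto_id)).const_mul (1/2 : ℝ)
  have : (1/2 : ℝ) * 0 = 0 := by norm_num
  rw [this] at hcomp
  refine hcomp.congr (fun u => ?_)
  simp only [Function.comp_apply, id_eq]
  ring

lemma tendsto_G : Tendsto G atTop (𝓝 (Real.log 2)) := by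
  have T2 : Tendsto (fun u : ℝ => u * Real.sinh u / Real.cosh u - u) atTop (𝓝 0) := by
    apply squeeze_zero_norm' (a := fun u => 2 * u * Real.exp (-(2 * u)))
    · filter_upwards [eventually_ge_atTop (0:ℝ)] with u hu
      have hc := Real.cosh_pos u
      have hrw : u * Real.sinh u / Real.cosh u - u
          = -(u * Real.exp (-u) / Real.cosh u) := by
        rw [Real.sinh_eq, Real.cosh_eq]
        field_simp
        ring
      rw [hrw, norm_neg, Real.norm_eq_abs, abs_of_nonneg (by positivity)]
      have h1 : 1 / Real.cosh u ≤ 2 * Real.exp (-u) := sech_le hu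
      have h2 : u * Real.exp (-u) / Real.cosh u
          = (u * Real.exp (-u)) * (1 / Real.cosh u) := by ring
      have h3 : Real.exp (-u) * Real.exp (-u) = Real.exp (-(2*u)) := by
        rw [← Real.exp_add]; ring_nf
      calc u * Real.exp (-u) / Real.cosh u
          = (u * Real.exp (-u)) * (1 / Real.cosh u) := h2
        _ ≤ (u * Real.exp (-u)) * (2 * Real.exp (-u)) := by
            apply mul_le_mul_of_nonneg_left h1 (by positivity)
        _ = 2 * u * (Real.exp (-u) * Real.exp (-u)) := by ring
        _ = 2 * u * Real.exp (-(2 * u)) := by rw [h3]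
    · exact tendsto_two_mul_exp_neg_two_mul
  have T3 : Tendsto (fun u : ℝ => u ^ 2 / (2 * Real.cosh u ^ 2)) atTop (𝓝 0) := by
    apply squeeze_zero_norm' (a := fun u => 2 * u ^ 2 * Real.exp (-(2 * u)))
    · filter_upwards [eventually_ge_atTop (0:ℝ)] with u hu
      have hc := Real.cosh_pos u
      rw [Real.norm_eq_abs, abs_of_nonneg (by positivity)]
      have h1 : 1 / Real.cosh u ≤ 2 * Real.exp (-u) := sech_le hu
      have h1' : (1 / Real.cosh u) ^ 2 ≤ (2 * Real.exp (-u)) ^ 2 :=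
        pow_le_pow_left₀ (by positivity) h1 2
      have h3 : (2 * Real.exp (-u)) ^ 2 = 4 * Real.exp (-(2*u)) := by
        rw [two_exp_sq, show 2 * -u = -(2*u) by ring]
      calc u ^ 2 / (2 * Real.cosh u ^ 2)
          = (u ^ 2 / 2) * (1 / Real.cosh u) ^ 2 := by field_simp
        _ ≤ (u ^ 2 / 2) * (4 * Real.exp (-(2*u))) := by
            rw [← h3]; exact mul_le_mul_of_nonneg_left h1' (by positivity)
        _ = 2 * u ^ 2 * Real.exp (-(2 * u)) := by ring
    · exact tendsto_sq_exp_neg_two_mul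
  have T1 : Tendsto (fun u : ℝ => u - Real.log (Real.cosh u)) atTop (𝓝 (Real.log 2)) := by
    have hrw : ∀ u : ℝ, u - Real.log (Real.cosh u)
        = Real.log (2 / (1 + Real.exp (-(2 * u)))) := by
      intro u
      have hpos : (0:ℝ) < 1 + Real.exp (-(2 * u)) := by positivity
      have h1 : Real.exp (-u) = Real.exp u * Real.exp (-(2 * u)) := by
        rw [← Real.exp_add]; ring_nf
      have hc : Real.cosh u = Real.exp u * ((1 + Real.exp (-(2 * u))) / 2) := by
        rw [Real.cosh_eq, h1]; ring
      rw [hc, Real.log_mul (Real.exp_ne_zero u) (by positivity), Real.log_exp,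
        Real.log_div (by positivity) (by norm_num)]
      rw [Real.log_div (by norm_num) (by positivity)]
      ring
    have hinner : Tendsto (fun u : ℝ => Real.exp (-(2 * u))) atTop (𝓝 0) := by
      have := Real.tendsto_exp_neg_atTop_nhds_zero.comp
        (Filter.Tendsto.const_mul_atTop two_pos tendsto_id)
      refine this.congr (fun u => ?_)
      simp [Function.comp]
    have hdiv : Tendsto (fun u : ℝ => 2 / (1 + Real.exp (-(2 * u)))) atTop (𝓝 2) := by
      have h := Tendsto.div (tendsto_const_nhds (x := (2:ℝ)))
        ((tendsto_const_nhds (x := (1:ℝ))).add hinner) (by norm_num)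
      have e : (2:ℝ) / (1 + 0) = 2 := by norm_num
      rw [e] at h
      exact h
    have hlog := (Real.continuousAt_log (by norm_num : (2:ℝ) ≠ 0)).tendsto.comp hdiv
    refine Tendsto.congr (fun u => (hrw u).symm) hlog
  have total := (T2.add T1).sub T3
  rw [zero_add, sub_zero] at total
  refine total.congr (fun u => ?_)
  rw [G]
  ring

lemma l_le_f2 {θ x : ℝ} (hx : 0 < x) (hθ : 0 < θ) :
    2 * x ^ 2 * Real.sinh (θ * x) / Real.cosh (θ * x) ^ 3 ≤ f2 θ x := by
  rw [f2]
  have hsπ : 0 < Real.sinh (π * x) := sinh_pi_x_pos hx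
  have hcθ : 0 < Real.cosh (θ * x) := Real.cosh_pos _
  have hsθ : 0 < Real.sinh (θ * x) := Real.sinh_pos_iff.2 (by positivity)
  have hcs : Real.sinh (π * x) ≤ Real.cosh (π * x) := sinh_le_cosh' _
  rw [div_le_div_iff₀ (by positivity) (by positivity)]
  nlinarith [pow_pos hcθ 3, mul_pos (mul_pos (mul_pos two_pos (pow_pos hx 2)) hsθ) (pow_pos hcθ 3)]

lemma l_nonneg {θ x : ℝ} (hx : 0 < x) (hθ : 0 < θ) :
    0 ≤ 2 * x ^ 2 * Real.sinh (θ * x) / Real.cosh (θ * x) ^ 3 := by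
  have hcθ : 0 < Real.cosh (θ * x) := Real.cosh_pos _
  have hsθ : 0 ≤ Real.sinh (θ * x) := (Real.sinh_pos_iff.2 (by positivity)).le
  positivity

lemma l_cont (θ : ℝ) :
    Continuous (fun x => 2 * x ^ 2 * Real.sinh (θ * x) / Real.cosh (θ * x) ^ 3) := by
  apply Continuous.div (by fun_prop) (by fun_prop)
  intro x
  positivity

lemma integrable_l {θ : ℝ} (h0 : 0 < θ) :
    IntegrableOn (fun x => 2 * x ^ 2 * Real.sinh (θ * x) / Real.cosh (θ * x) ^ 3) (Ioi (0:ℝ)) := by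
  apply Integrable.mono (integrable_f2 h0)
    ((l_cont θ).continuousOn.aestronglyMeasurable measurableSet_Ioi)
  rw [ae_restrict_iff' measurableSet_Ioi]
  refine ae_of_all _ (fun x hx => ?_)
  have hx' : (0:ℝ) < x := hx
  have hsπ : 0 < Real.sinh (π * x) := sinh_pi_x_pos hx'
  have hcθ : 0 < Real.cosh (θ * x) := Real.cosh_pos _
  have hsθ : 0 < Real.sinh (θ * x) := Real.sinh_pos_iff.2 (by positivity)
  have hf2 : 0 ≤ f2 θ x := by rw [f2]; positivity
  rw [Real.norm_eq_abs, Real.norm_eq_abs, abs_of_nonneg (l_nonneg hx' h0), abs_of_nonneg hf2]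
  exact l_le_f2 hx' h0

lemma hasDerivAt_H {θ : ℝ} (h0 : 0 < θ) (x : ℝ) :
    HasDerivAt (fun x => (2 / θ ^ 3) * G (θ * x))
      (2 * x ^ 2 * Real.sinh (θ * x) / Real.cosh (θ * x) ^ 3) x := by
  have h := ((hasDerivAt_G (θ * x)).comp x ((hasDerivAt_id x).const_mul θ)).const_mul (2 / θ ^ 3)
  refine h.congr_deriv (Eq.symm ?_)
  have hc := (Real.cosh_pos (θ * x)).ne'
  field_simp

lemma integral_l {θ : ℝ} (h0 : 0 < θ) :
    ∫ x in Ioi (0:ℝ), 2 * x ^ 2 * Real.sinh (θ * x) / Real.cosh (θ * x) ^ 3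
      = 2 * Real.log 2 / θ ^ 3 := by
  have htend : Tendsto (fun x => (2 / θ ^ 3) * G (θ * x)) atTop (𝓝 ((2 / θ ^ 3) * Real.log 2)) := by
    exact (tendsto_G.comp (Filter.Tendsto.const_mul_atTop h0 tendsto_id)).const_mul _
  have heq := integral_Ioi_of_hasDerivAt_of_tendsto'
    (f := fun x => (2 / θ ^ 3) * G (θ * x))
    (f' := fun x => 2 * x ^ 2 * Real.sinh (θ * x) / Real.cosh (θ * x) ^ 3)
    (fun x _ => hasDerivAt_H h0 x) (integrable_l h0) htend
  rw [heq]
  have hG0 : G (θ * 0) = 0 := by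
    simp [G]
  rw [hG0]
  ring

lemma phi2_ge {θ : ℝ} (h0 : 0 < θ) (hπ : θ < π) : 2 * Real.log 2 / θ ^ 3 ≤ phi2 θ := by
  rw [← integral_l h0, phi2]
  apply setIntegral_mono_on (integrable_l h0) (integrable_f2 h0) measurableSet_Ioi
  exact fun x hx => l_le_f2 hx h0

lemma sin_ge_cubic {y : ℝ} (hy : 0 ≤ y) : y - y ^ 3 / 6 ≤ Real.sin y := by
  have hd : ∀ y : ℝ, HasDerivAt (fun y => Real.sin y - y + y ^ 3 / 6)
      (Real.cos y - 1 + 3 * y ^ 2 / 6) y := by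
    intro y
    have h := ((Real.hasDerivAt_sin y).sub (hasDerivAt_id y)).add
      ((hasDerivAt_pow 3 y).div_const 6)
    exact h.congr_deriv (by norm_num)
  have mono : MonotoneOn (fun y => Real.sin y - y + y ^ 3 / 6) (Ici (0:ℝ)) := by
    apply monotoneOn_of_deriv_nonneg (convex_Ici 0)
      (Continuous.continuousOn (by fun_prop))
      (fun y _ => (hd y).differentiableAt.differentiableWithinAt)
    intro y _
    rw [(hd y).deriv]
    have := Real.one_sub_sq_div_two_le_cos (x := y)
    nlinarith
  have h := mono (self_mem_Ici) hy hy
  simp only [Real.sin_zero] at h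
  norm_num at h
  linarith

lemma mul_cos_le_sin {y : ℝ} (h0 : 0 ≤ y) (hy : y ≤ π) : y * Real.cos y ≤ Real.sin y := by
  have hd : ∀ y : ℝ, HasDerivAt (fun y => Real.sin y - y * Real.cos y)
      (Real.cos y - (1 * Real.cos y + y * -Real.sin y)) y := by
    intro y
    exact (Real.hasDerivAt_sin y).sub ((hasDerivAt_id y).mul (Real.hasDerivAt_cos y))
  have mono : MonotoneOn (fun y => Real.sin y - y * Real.cos y) (Icc (0:ℝ) π) := by
    apply monotoneOn_of_deriv_nonneg (convex_Icc 0 π)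
      (Continuous.continuousOn (by fun_prop))
      (fun y _ => (hd y).differentiableAt.differentiableWithinAt)
    intro y hy'
    rw [interior_Icc] at hy'
    rw [(hd y).deriv]
    have hsin : 0 ≤ Real.sin y := Real.sin_nonneg_of_nonneg_of_le_pi hy'.1.le hy'.2.le
    nlinarith [hy'.1]
  have h := mono (left_mem_Icc.2 Real.pi_pos.le) ⟨h0, hy⟩ h0
  simp only [Real.sin_zero, Real.cos_zero] at h
  norm_num at h
  linarith

lemma sin_cube_ge {x : ℝ} (h0 : 0 < x) (hx : x < π / 2) :
    x ^ 3 * Real.cos x ≤ Real.sin x ^ 3 := by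
  have hd : ∀ y : ℝ, HasDerivAt (fun y => Real.sin y ^ 3 - y ^ 3 * Real.cos y)
      ((3:ℕ) * Real.sin y ^ 2 * Real.cos y -
        ((3:ℕ) * y ^ 2 * 1 * Real.cos y + y ^ 3 * -Real.sin y)) y := by
    intro y
    have h1 : HasDerivAt (fun y => Real.sin y ^ 3) ((3:ℕ) * Real.sin y ^ 2 * Real.cos y) y := by
      have := (Real.hasDerivAt_sin y).pow 3
      exact HasDerivAt.congr_deriv this (by norm_num)
    have h2 : HasDerivAt (fun y => y ^ 3 * Real.cos y)
        ((3:ℕ) * y ^ 2 * 1 * Real.cos y + y ^ 3 * -Real.sin y) y := by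
      have := ((hasDerivAt_id y).pow 3).mul (Real.hasDerivAt_cos y)
      exact HasDerivAt.congr_deriv this (by norm_num)
    exact h1.sub h2
  have mono : MonotoneOn (fun y => Real.sin y ^ 3 - y ^ 3 * Real.cos y) (Icc (0:ℝ) (π / 2)) := by
    apply monotoneOn_of_deriv_nonneg (convex_Icc 0 (π / 2))
      (Continuous.continuousOn (by fun_prop))
      (fun y _ => (hd y).differentiableAt.differentiableWithinAt)
    intro y hy'
    rw [interior_Icc] at hy'
    obtain ⟨hy0, hy2⟩ := hy'
    rw [(hd y).deriv]
    have hyπ : y ≤ π := by linarith [Real.pi_pos]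
    have hsin0 : 0 ≤ Real.sin y := Real.sin_nonneg_of_nonneg_of_le_pi hy0.le hyπ
    have hcos0 : 0 ≤ Real.cos y := Real.cos_nonneg_of_mem_Icc ⟨by linarith, hy2.le⟩
    have hsle : Real.sin y ≤ y := Real.sin_le hy0.le
    have hsge : y - y ^ 3 / 6 ≤ Real.sin y := sin_ge_cubic hy0.le
    have hmc : y * Real.cos y ≤ Real.sin y := mul_cos_le_sin hy0.le hyπ
    have e1 : (y - Real.sin y) * (y + Real.sin y) ≤ (y ^ 3 / 6) * (2 * y) := by
      apply mul_le_mul (by linarith) (by linarith) (by linarith) (by positivity)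
    have E1 : 3 * Real.cos y * ((y - Real.sin y) * (y + Real.sin y))
        ≤ 3 * Real.cos y * ((y ^ 3 / 6) * (2 * y)) :=
      mul_le_mul_of_nonneg_left e1 (by linarith)
    have E2 : y ^ 3 * (y * Real.cos y) ≤ y ^ 3 * Real.sin y :=
      mul_le_mul_of_nonneg_left hmc (by positivity)
    push_cast
    nlinarith [E1, E2]
  have h := mono (left_mem_Icc.2 (by linarith [Real.pi_pos])) ⟨h0.le, hx.le⟩ h0.le
  simp only [Real.sin_zero, Real.cos_zero] at h
  norm_num at h
  linarith

lemma key_ineq {θ : ℝ} (h0 : 0 < θ) (hπ : θ < π) :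
    Real.log 2 / 4 * (Real.cos (θ / 2) / Real.sin (θ / 2) ^ 3) ≤ 2 * Real.log 2 / θ ^ 3 := by
  have hx0 : 0 < θ / 2 := by linarith
  have hxπ : θ / 2 < π / 2 := by linarith
  have hsin : 0 < Real.sin (θ / 2) :=
    Real.sin_pos_of_pos_of_lt_pi hx0 (by linarith [Real.pi_pos])
  have hmain := sin_cube_ge hx0 hxπ
  have hlog : 0 ≤ Real.log 2 := Real.log_nonneg one_le_two
  have h1 : Real.cos (θ / 2) / Real.sin (θ / 2) ^ 3 ≤ 1 / (θ / 2) ^ 3 := by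
    rw [div_le_div_iff₀ (by positivity) (by positivity)]
    nlinarith
  calc Real.log 2 / 4 * (Real.cos (θ / 2) / Real.sin (θ / 2) ^ 3)
      ≤ Real.log 2 / 4 * (1 / (θ / 2) ^ 3) :=
        mul_le_mul_of_nonneg_left h1 (by positivity)
    _ = 2 * Real.log 2 / θ ^ 3 := by
        field_simp
        ring

lemma sin_half_pos {θ : ℝ} (h0 : 0 < θ) (hπ : θ < π) : 0 < Real.sin (θ / 2) :=
  Real.sin_pos_of_pos_of_lt_pi (by linarith) (by linarith [Real.pi_pos])

lemma hasDerivAt_cot_half {θ : ℝ} (h0 : 0 < θ) (hπ : θ < π) :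
    HasDerivAt (fun θ => Real.cot (θ / 2)) (-(1 / 2) / Real.sin (θ / 2) ^ 2) θ := by
  have hs := (sin_half_pos h0 hπ).ne'
  have hcos : HasDerivAt (fun θ : ℝ => Real.cos (θ / 2)) (-Real.sin (θ / 2) * (1 / 2)) θ := by
    have := (Real.hasDerivAt_cos (θ / 2)).comp θ ((hasDerivAt_id θ).div_const 2)
    exact HasDerivAt.congr_deriv this (by norm_num)
  have hsin : HasDerivAt (fun θ : ℝ => Real.sin (θ / 2)) (Real.cos (θ / 2) * (1 / 2)) θ := by
    have := (Real.hasDerivAt_sin (θ / 2)).comp θ ((hasDerivAt_id θ).div_const 2)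
    exact HasDerivAt.congr_deriv this (by norm_num)
  have h := hcos.div hsin hs
  have heq : (fun θ : ℝ => Real.cot (θ / 2)) = fun θ : ℝ => Real.cos (θ / 2) / Real.sin (θ / 2) := by
    funext t
    rw [Real.cot_eq_cos_div_sin]
  rw [heq]
  refine h.congr_deriv (Eq.symm ?_)
  have hpyth : Real.sin (θ / 2) ^ 2 + Real.cos (θ / 2) ^ 2 = 1 := Real.sin_sq_add_cos_sq _
  field_simp
  linear_combination (1:ℝ) * hpyth

noncomputable def g1 (θ : ℝ) : ℝ := phi1 θ + Real.log 2 / 4 / Real.sin (θ / 2) ^ 2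

noncomputable def g2 (θ : ℝ) : ℝ :=
  phi2 θ - Real.log 2 / 4 * (Real.cos (θ / 2) / Real.sin (θ / 2) ^ 3)

lemma hasDerivAt_target {θ : ℝ} (h0 : 0 < θ) (hπ : θ < π) :
    HasDerivAt (fun θ => phi θ - Real.log 2 / 2 * Real.cot (θ / 2)) (g1 θ) θ := by
  have h := (hasDerivAt_phi h0 hπ).sub ((hasDerivAt_cot_half h0 hπ).const_mul (Real.log 2 / 2))
  refine h.congr_deriv (Eq.symm ?_)
  rw [g1]
  ring

lemma hasDerivAt_g1 {θ : ℝ} (h0 : 0 < θ) (hπ : θ < π) : HasDerivAt g1 (g2 θ) θ := by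
  have hs := (sin_half_pos h0 hπ).ne'
  have hsin : HasDerivAt (fun θ : ℝ => Real.sin (θ / 2)) (Real.cos (θ / 2) * (1 / 2)) θ := by
    have := (Real.hasDerivAt_sin (θ / 2)).comp θ ((hasDerivAt_id θ).div_const 2)
    exact HasDerivAt.congr_deriv this (by norm_num)
  have hden : HasDerivAt (fun θ : ℝ => Real.sin (θ / 2) ^ 2)
      (2 * Real.sin (θ / 2) * (Real.cos (θ / 2) * (1 / 2))) θ := by
    have := hsin.pow 2
    exact HasDerivAt.congr_deriv this (by norm_num)
  have hσ := (hasDerivAt_const θ (Real.log 2 / 4)).div hden (by positivity)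
  have h := (hasDerivAt_phi1 h0 hπ).add hσ
  have hg1 : g1 = fun θ => phi1 θ + Real.log 2 / 4 / Real.sin (θ / 2) ^ 2 := rfl
  rw [hg1]
  refine h.congr_deriv (Eq.symm ?_)
  rw [g2]
  have hssq : Real.sin (θ / 2) ≠ 0 := hs
  field_simp
  ring

lemma g2_nonneg {θ : ℝ} (h0 : 0 < θ) (hπ : θ < π) : 0 ≤ g2 θ := by
  rw [g2]
  have h1 := phi2_ge h0 hπ
  have h2 := key_ineq h0 hπ
  linarith

theorem phi_aux :
    ConvexOn ℝ (Ioo (0:ℝ) π) (fun θ => phi θ - (Real.log 2 / 2) * Real.cot (θ / 2)) := by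
  apply convexOn_of_deriv2_nonneg (convex_Ioo 0 π)
  · intro θ hθ
    exact (hasDerivAt_target hθ.1 hθ.2).continuousAt.continuousWithinAt
  · intro θ hθ
    rw [interior_Ioo] at hθ
    exact (hasDerivAt_target hθ.1 hθ.2).differentiableAt.differentiableWithinAt
  · intro θ hθ
    rw [interior_Ioo] at hθ
    have hev : deriv (fun θ => phi θ - Real.log 2 / 2 * Real.cot (θ / 2)) =ᶠ[𝓝 θ] g1 := by
      filter_upwards [Ioo_mem_nhds hθ.1 hθ.2] with σ hσ
      exact (hasDerivAt_target hσ.1 hσ.2).deriv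
    exact ((hev.differentiableAt_iff).2 (hasDerivAt_g1 hθ.1 hθ.2).differentiableAt).differentiableWithinAt
  · intro θ hθ
    rw [interior_Ioo] at hθ
    have hev : deriv (fun θ => phi θ - Real.log 2 / 2 * Real.cot (θ / 2)) =ᶠ[𝓝 θ] g1 := by
      filter_upwards [Ioo_mem_nhds hθ.1 hθ.2] with σ hσ
      exact (hasDerivAt_target hσ.1 hσ.2).deriv
    have h2 : deriv^[2] (fun θ => phi θ - Real.log 2 / 2 * Real.cot (θ / 2)) θ
        = deriv (deriv (fun θ => phi θ - Real.log 2 / 2 * Real.cot (θ / 2))) θ := rfl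
    rw [h2, hev.deriv_eq, (hasDerivAt_g1 hθ.1 hθ.2).deriv]
    exact g2_nonneg hθ.1 hθ.2

theorem phi_sub_log2_half_cot_convexOn :
    ConvexOn ℝ (Ioo (0:ℝ) π) (fun θ => phi θ - (Real.log 2 / 2) * Real.cot (θ / 2)) := by
  exact phi_aux
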